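/- Suppose the frame intertwining assumption holds, the frames {f_k^n} are tight, the range condition (Λ_k†·(⟨y_n,f_k^n⟩)_n)_m ∈ R(F_m) holds for each m, and additionally the frames {e_k^m} are tight. Then 𝒜y coincides with the minimum-norm least-squares solution x† of Ax = y. -/

import Mathlib

open scoped ComplexInnerProductSpace Matrix ComplexConjugate

private lemma rc_ofReal : (RCLike.ofReal : ℝ → ℂ) = Complex.ofReal := rfl

/-- Polarization: tight frame gives a Parseval-type identity for inner products. -/
lemma tight_polar {E : Type*} [NormedAddCommGroup E] [InnerProductSpace ℂ E]
    {e : ℕ → E} {B : ℝ}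
    (h : ∀ x : E, HasSum (fun k => ‖⟪e k, x⟫‖ ^ 2) (B * ‖x‖ ^ 2))
    (u v : E) :
    HasSum (fun k => conj ⟪e k, u⟫ * ⟪e k, v⟫) ((B : ℂ) * ⟪u, v⟫) := by
  have key : ∀ x : E, HasSum (fun k => ((‖⟪e k, x⟫‖ ^ 2 : ℝ) : ℂ))
      (((B * ‖x‖ ^ 2 : ℝ) : ℂ)) := fun x => Complex.ofRealCLM.hasSum (h x)
  have h1 := key (u + v)
  have h2 := key (u - v)
  have h3 := key (u - Complex.I • v)
  have h4 := key (u + Complex.I • v)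
  have hcomb := ((h1.sub h2).add ((h3.sub h4).mul_right Complex.I)).div_const 4
  convert hcomb using 1
  · rfl
  · funext k
    have := inner_eq_sum_norm_sq_div_four (𝕜 := ℂ) (⟪e k, u⟫) (⟪e k, v⟫)
    rw [RCLike.inner_apply'] at this
    rw [this]
    simp only [inner_add_right, inner_sub_right, inner_smul_right, RCLike.I_to_complex,
      smul_eq_mul, rc_ofReal]
    push_cast
    ring
  · have := inner_eq_sum_norm_sq_div_four (𝕜 := ℂ) u v
    rw [this]
    simp only [RCLike.I_to_complex, rc_ofReal]
    push_cast
    ring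

private lemma arith_step {B s P Q R : ℝ} (hB : 0 < B) (hs : 0 < s)
    (h1 : s ≤ B⁻¹ * P) (h2 : P ^ 2 ≤ Q * R) (h3 : R ≤ B * s) (hQ : 0 ≤ Q) (hP : 0 ≤ P) :
    s ≤ B⁻¹ * Q := by
  have h9 : s * s ≤ (B⁻¹ * Q) * s := by
    calc s * s ≤ B⁻¹ * P * (B⁻¹ * P) := mul_le_mul h1 h1 hs.le (by positivity)
      _ = B⁻¹ * B⁻¹ * P ^ 2 := by ring
      _ ≤ B⁻¹ * B⁻¹ * (Q * R) := mul_le_mul_of_nonneg_left h2 (by positivity)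
      _ ≤ B⁻¹ * B⁻¹ * (Q * (B * s)) :=
          mul_le_mul_of_nonneg_left (mul_le_mul_of_nonneg_left h3 hQ) (by positivity)
      _ = B⁻¹ * Q * s * (B⁻¹ * B) := by ring
      _ = B⁻¹ * Q * s := by rw [inv_mul_cancel₀ hB.ne', mul_one]
  exact le_of_mul_le_mul_right h9 hs

/-- Tight frame reconstruction: the frame series converges to the vector. -/
lemma tight_reconstruct {E : Type*} [NormedAddCommGroup E] [InnerProductSpace ℂ E]
    [CompleteSpace E] {e : ℕ → E} {B : ℝ} (hB : 0 < B)
    (h : ∀ x : E, HasSum (fun k => ‖⟪e k, x⟫‖ ^ 2) (B * ‖x‖ ^ 2))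
    (z : E) :
    HasSum (fun k => ⟪e k, z⟫ • (((B⁻¹ : ℝ) : ℂ) • e k)) z := by
  set c : ℕ → ℂ := fun k => ⟪e k, z⟫ with hc
  -- finite partial sum bound
  have bound : ∀ t : Finset ℕ,
      ‖∑ k ∈ t, c k • (((B⁻¹ : ℝ) : ℂ) • e k)‖ ^ 2 ≤ B⁻¹ * ∑ k ∈ t, ‖c k‖ ^ 2 := by
    intro t
    set S : E := ∑ k ∈ t, c k • (((B⁻¹ : ℝ) : ℂ) • e k) with hS
    by_cases hS0 : S = 0
    · rw [hS0]
      have hnn : (0:ℝ) ≤ B⁻¹ * ∑ k ∈ t, ‖c k‖ ^ 2 := by positivity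
      simpa using hnn
    -- ⟪S, S⟫ computation
    have hinner : (‖S‖ ^ 2 : ℝ) ≤ B⁻¹ * ∑ k ∈ t, ‖c k‖ * ‖⟪e k, S⟫‖ := by
      have h1 : (‖S‖ ^ 2 : ℝ) = RCLike.re ⟪S, S⟫ := by
        rw [← inner_self_eq_norm_sq (𝕜 := ℂ)]
      have h2 : ⟪S, S⟫ = ∑ k ∈ t, conj (c k) * (((B⁻¹ : ℝ) : ℂ) * ⟪e k, S⟫) := by
        rw [hS, sum_inner]
        refine Finset.sum_congr rfl fun k _ => ?_
        rw [inner_smul_left, inner_smul_left]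
        rw [Complex.conj_ofReal]
      have h3 : RCLike.re ⟪S, S⟫ ≤ ‖⟪S, S⟫‖ := RCLike.re_le_norm _
      have h4 : ‖⟪S, S⟫‖ ≤ ∑ k ∈ t, ‖conj (c k) * (((B⁻¹ : ℝ) : ℂ) * ⟪e k, S⟫)‖ := by
        rw [h2]; exact norm_sum_le _ _
      have h5 : ∀ k, ‖conj (c k) * (((B⁻¹ : ℝ) : ℂ) * ⟪e k, S⟫)‖
          = B⁻¹ * (‖c k‖ * ‖⟪e k, S⟫‖) := by
        intro k
        rw [norm_mul, norm_mul, RCLike.norm_conj, Complex.norm_real,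
          Real.norm_of_nonneg (by positivity)]
        ring
      calc (‖S‖ ^ 2 : ℝ) = RCLike.re ⟪S, S⟫ := h1
        _ ≤ ‖⟪S, S⟫‖ := h3
        _ ≤ ∑ k ∈ t, ‖conj (c k) * (((B⁻¹ : ℝ) : ℂ) * ⟪e k, S⟫)‖ := h4
        _ = B⁻¹ * ∑ k ∈ t, ‖c k‖ * ‖⟪e k, S⟫‖ := by
            rw [Finset.mul_sum]; exact Finset.sum_congr rfl fun k _ => h5 k
    -- Cauchy-Schwarz
    have hcs : (∑ k ∈ t, ‖c k‖ * ‖⟪e k, S⟫‖) ^ 2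
        ≤ (∑ k ∈ t, ‖c k‖ ^ 2) * (∑ k ∈ t, ‖⟪e k, S⟫‖ ^ 2) :=
      Finset.sum_mul_sq_le_sq_mul_sq t _ _
    have hpart : (∑ k ∈ t, ‖⟪e k, S⟫‖ ^ 2) ≤ B * ‖S‖ ^ 2 :=
      sum_le_hasSum t (fun k _ => by positivity) (h S)
    have hSpos : (0 : ℝ) < ‖S‖ := norm_pos_iff.mpr hS0
    -- combine: ‖S‖^4 ≤ B⁻¹^2 * (Σ‖c‖²) * B * ‖S‖²
    have hnn1 : (0:ℝ) ≤ ∑ k ∈ t, ‖c k‖ ^ 2 := by positivity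
    have hP : (0:ℝ) ≤ ∑ k ∈ t, ‖c k‖ * ‖⟪e k, S⟫‖ :=
      Finset.sum_nonneg fun k _ => by positivity
    have hs2 : (0 : ℝ) < ‖S‖ ^ 2 := by positivity
    have h6 : ‖S‖ ^ 2 * ‖S‖ ^ 2
        ≤ (B⁻¹ * ∑ k ∈ t, ‖c k‖ * ‖⟪e k, S⟫‖) * (B⁻¹ * ∑ k ∈ t, ‖c k‖ * ‖⟪e k, S⟫‖) :=
      mul_le_mul hinner hinner (by positivity) (by positivity)
    exact arith_step hB hs2 hinner hcs hpart hnn1 hP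
  -- summability
  have hsummable : Summable (fun k => c k • (((B⁻¹ : ℝ) : ℂ) • e k)) := by
    rw [summable_iff_vanishing_norm]
    intro ε hε
    have hsum2 : Summable fun k => ‖c k‖ ^ 2 := (h z).summable
    obtain ⟨s, hs⟩ := summable_iff_vanishing_norm.1 hsum2 (B * ε ^ 2) (by positivity)
    refine ⟨s, fun t ht => ?_⟩
    have h3 : ∑ k ∈ t, ‖c k‖ ^ 2 < B * ε ^ 2 := by
      have hnn : ‖∑ k ∈ t, ‖c k‖ ^ 2‖ = ∑ k ∈ t, ‖c k‖ ^ 2 := by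
        rw [Real.norm_of_nonneg]; positivity
      have := hs t ht
      rwa [hnn] at this
    have h4 : ‖∑ k ∈ t, c k • (((B⁻¹ : ℝ) : ℂ) • e k)‖ ^ 2 < ε ^ 2 := by
      calc ‖∑ k ∈ t, c k • (((B⁻¹ : ℝ) : ℂ) • e k)‖ ^ 2
          ≤ B⁻¹ * ∑ k ∈ t, ‖c k‖ ^ 2 := bound t
        _ < B⁻¹ * (B * ε ^ 2) := mul_lt_mul_of_pos_left h3 (inv_pos.2 hB)
        _ = ε ^ 2 := by field_simp
    exact lt_of_pow_lt_pow_left₀ 2 hε.le h4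
  obtain ⟨L, hL⟩ := hsummable
  -- identify the limit with z
  have hLz : L = z := by
    have hw : ∀ w : E, ⟪w, L⟫ = ⟪w, z⟫ := by
      intro w
      have hL' : HasSum (fun k => ⟪w, c k • (((B⁻¹ : ℝ) : ℂ) • e k)⟫) ⟪w, L⟫ :=
        (innerSL ℂ w).hasSum hL
      have hterm : (fun k => ⟪w, c k • (((B⁻¹ : ℝ) : ℂ) • e k)⟫)
          = fun k => ((B⁻¹ : ℝ) : ℂ) * (conj ⟪e k, w⟫ * ⟪e k, z⟫) := by
        funext k
        rw [inner_smul_right, inner_smul_right, ← inner_conj_symm (e k) w,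
          Complex.conj_conj]
        ring
      rw [hterm] at hL'
      have hp := (tight_polar h w z).mul_left (((B⁻¹ : ℝ) : ℂ))
      have hval : ((B⁻¹ : ℝ) : ℂ) * ((B : ℂ) * ⟪w, z⟫) = ⟪w, z⟫ := by
        rw [← mul_assoc, ← Complex.ofReal_mul, inv_mul_cancel₀ hB.ne',
          Complex.ofReal_one, one_mul]
      rw [hval] at hp
      exact hL'.unique hp
    have h0 : ⟪L - z, L - z⟫ = (0 : ℂ) := by
      rw [inner_sub_right, hw (L - z), sub_self]
    exact sub_eq_zero.1 (inner_self_eq_zero.1 h0)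
  rwa [hLz] at hL

private lemma key_range {Mn Nn : ℕ} (Λ : Matrix (Fin Nn) (Fin Mn) ℂ)
    (Λd : Matrix (Fin Mn) (Fin Nn) ℂ)
    (h1 : Λ * Λd * Λ = Λ) (h3 : (Λ * Λd)ᴴ = Λ * Λd)
    (a : Fin Mn → ℂ) (hv : Fin Nn → ℂ) :
    star (Λ.mulVec a) ⬝ᵥ ((Λ * Λd).mulVec hv - hv) = 0 := by
  have hΛ : Λᴴ * (Λ * Λd) = Λᴴ := by
    calc Λᴴ * (Λ * Λd) = Λᴴ * (Λ * Λd)ᴴ := by rw [h3]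
      _ = (Λ * Λd * Λ)ᴴ := by rw [Matrix.conjTranspose_mul (Λ * Λd) Λ]
      _ = Λᴴ := by rw [h1]
  rw [dotProduct_sub, Matrix.star_mulVec, Matrix.dotProduct_mulVec,
    Matrix.vecMul_vecMul, hΛ, sub_self]

private lemma key_ker {Mn Nn : ℕ} (Λ : Matrix (Fin Nn) (Fin Mn) ℂ)
    (Λd : Matrix (Fin Mn) (Fin Nn) ℂ)
    (h2 : Λd * Λ * Λd = Λd) (h4 : (Λd * Λ)ᴴ = Λd * Λ)
    (a : Fin Mn → ℂ) (hv : Fin Nn → ℂ) (ha : Λ.mulVec a = 0) :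
    star a ⬝ᵥ Λd.mulVec hv = 0 := by
  have hz : star a ᵥ* Λd = 0 := by
    have e1 : star a ᵥ* Λd = star a ᵥ* (Λd * Λ) ᵥ* Λd := by
      rw [Matrix.vecMul_vecMul, h2]
    have e2 : star a ᵥ* (Λd * Λ) = 0 := by
      rw [← h4, Matrix.conjTranspose_mul, ← Matrix.vecMul_vecMul,
        ← Matrix.star_mulVec, ha]
      simp
    rw [e1, e2]
    simp
  rw [Matrix.dotProduct_mulVec, hz]
  simp

/-- If the intertwining assumption holds, the frames `{f n k}` are tight (bound `C`),
the range condition holds, and the frames `{e m k}` are also tight (bound `B`, so that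
`ẽ m k = B⁻¹ • e m k`), then `𝒜y` coincides with the minimum-norm least-squares
solution `x†` of `A x = y`. -/
theorem frame_min_norm_least_squares_tight
    {M N : ℕ}
    {Xs : Fin M → Type*} [∀ m, NormedAddCommGroup (Xs m)]
    [∀ m, InnerProductSpace ℂ (Xs m)] [∀ m, CompleteSpace (Xs m)]
    {Ys : Fin N → Type*} [∀ n, NormedAddCommGroup (Ys n)]
    [∀ n, InnerProductSpace ℂ (Ys n)] [∀ n, CompleteSpace (Ys n)]
    (A : PiLp 2 Xs →L[ℂ] PiLp 2 Ys)
    (e : ∀ m, ℕ → Xs m) (f : ∀ n, ℕ → Ys n)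
    (B C : ℝ) (hB : 0 < B) (hC : 0 < C)
    (htight_e : ∀ (m) (x : Xs m), HasSum (fun k => ‖⟪e m k, x⟫‖ ^ 2) (B * ‖x‖ ^ 2))
    (htight_f : ∀ (n) (y : Ys n), HasSum (fun k => ‖⟪f n k, y⟫‖ ^ 2) (C * ‖y‖ ^ 2))
    (Λ : ℕ → Matrix (Fin N) (Fin M) ℂ)
    (hΛ : ∀ (k : ℕ) (x : PiLp 2 Xs) (n : Fin N),
      ⟪f n k, A x n⟫ = ∑ m, Λ k n m * ⟪e m k, x m⟫)
    -- `Λd k` is the Moore–Penrose pseudo-inverse of `Λ k`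
    (Λd : ℕ → Matrix (Fin M) (Fin N) ℂ)
    (hMP1 : ∀ k, Λ k * Λd k * Λ k = Λ k)
    (hMP2 : ∀ k, Λd k * Λ k * Λd k = Λd k)
    (hMP3 : ∀ k, (Λ k * Λd k)ᴴ = Λ k * Λd k)
    (hMP4 : ∀ k, (Λd k * Λ k)ᴴ = Λd k * Λ k)
    (y : PiLp 2 Ys)
    -- the range condition: the coefficient sequences lie in the range of the
    -- analysis operators `F m`
    (hrange : ∀ m, ∃ z : Xs m, ∀ k,
      ⟪e m k, z⟫ = (Λd k).mulVec (fun n => ⟪f n k, y n⟫) m) :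
    ∃ x : PiLp 2 Xs,
      (∀ m, HasSum
        (fun k => ((Λd k).mulVec (fun n => ⟪f n k, y n⟫) m) •
          (((B⁻¹ : ℝ) : ℂ) • e m k)) (x m)) ∧
      (∀ z : PiLp 2 Xs, ‖A x - y‖ ≤ ‖A z - y‖) ∧
      (∀ z : PiLp 2 Xs, (∀ w : PiLp 2 Xs, ‖A z - y‖ ≤ ‖A w - y‖) → ‖x‖ ≤ ‖z‖) := by
  classical
  choose xv hxv using hrange
  set X : PiLp 2 Xs := (WithLp.equiv 2 (∀ m, Xs m)).symm xv with hXdef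
  have hXm : ∀ m, X m = xv m := fun m => rfl
  set hy : ℕ → Fin N → ℂ := fun k n => ⟪f n k, y n⟫ with hhy
  have hgX : ∀ k, (fun m => ⟪e m k, X m⟫) = (Λd k).mulVec (hy k) := by
    intro k; funext m; rw [hXm]; exact hxv m k
  have hAw : ∀ (w : PiLp 2 Xs) (k : ℕ), (fun n => ⟪f n k, A w n⟫)
      = (Λ k).mulVec (fun m => ⟪e m k, w m⟫) := by
    intro w k; funext n
    rw [hΛ k w n]
    simp [Matrix.mulVec, dotProduct]
  -- the Y-side coefficients of `A X - y`
  have hv : ∀ k : ℕ, (fun n => ⟪f n k, (A X - y) n⟫)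
      = (Λ k * Λd k).mulVec (hy k) - hy k := by
    intro k; funext n
    simp only [PiLp.sub_apply, inner_sub_right, Pi.sub_apply]
    rw [congrFun (hAw X k) n, hgX k, Matrix.mulVec_mulVec]
  -- orthogonality of the residual to the range of A
  have horthY : ∀ w : PiLp 2 Xs, ⟪A w, A X - y⟫ = 0 := by
    intro w
    have hsum := hasSum_sum (s := (Finset.univ : Finset (Fin N)))
      (f := fun n (k : ℕ) => (starRingEnd ℂ) ⟪f n k, A w n⟫ * ⟪f n k, (A X - y) n⟫)
      (a := fun n => (C : ℂ) * ⟪A w n, (A X - y) n⟫)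
      (fun n _ => tight_polar (htight_f n) (A w n) ((A X - y) n))
    have hzero : (fun k => ∑ n, (starRingEnd ℂ) ⟪f n k, A w n⟫ * ⟪f n k, (A X - y) n⟫)
        = fun _ : ℕ => (0 : ℂ) := by
      funext k
      have hsum0 : ∑ n, (starRingEnd ℂ) ⟪f n k, A w n⟫ * ⟪f n k, (A X - y) n⟫
          = star ((Λ k).mulVec (fun m => ⟪e m k, w m⟫)) ⬝ᵥ
            ((Λ k * Λd k).mulVec (hy k) - hy k) := by
        simp only [dotProduct, Pi.star_apply, RCLike.star_def]
        refine Finset.sum_congr rfl fun n _ => ?_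
        rw [congrFun (hAw w k) n, congrFun (hv k) n]
      rw [hsum0]
      exact key_range (Λ k) (Λd k) (hMP1 k) (hMP3 k) _ _
    rw [hzero] at hsum
    have h0 : ∑ n, (C : ℂ) * ⟪A w n, (A X - y) n⟫ = 0 := by
      simpa using (hsum.unique hasSum_zero)
    have h1 : (C : ℂ) * ⟪A w, A X - y⟫ = 0 := by
      rw [PiLp.inner_apply, Finset.mul_sum]
      exact h0
    rcases mul_eq_zero.1 h1 with h | h
    · exact absurd h (by exact_mod_cast hC.ne')
    · exact h
  -- X is orthogonal to the kernel of A
  have horthX : ∀ v : PiLp 2 Xs, A v = 0 → ⟪v, X⟫ = 0 := by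
    intro v hAv
    have hsum := hasSum_sum (s := (Finset.univ : Finset (Fin M)))
      (f := fun m (k : ℕ) => (starRingEnd ℂ) ⟪e m k, v m⟫ * ⟪e m k, X m⟫)
      (a := fun m => (B : ℂ) * ⟪v m, X m⟫)
      (fun m _ => tight_polar (htight_e m) (v m) (X m))
    have hzero : (fun k => ∑ m, (starRingEnd ℂ) ⟪e m k, v m⟫ * ⟪e m k, X m⟫)
        = fun _ : ℕ => (0 : ℂ) := by
      funext k
      have ha : (Λ k).mulVec (fun m => ⟪e m k, v m⟫) = 0 := by
        rw [← hAw v k]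
        funext n
        rw [hAv]
        simp
      have hsum0 : ∑ m, (starRingEnd ℂ) ⟪e m k, v m⟫ * ⟪e m k, X m⟫
          = star (fun m => ⟪e m k, v m⟫) ⬝ᵥ (Λd k).mulVec (hy k) := by
        simp only [dotProduct, Pi.star_apply, RCLike.star_def]
        refine Finset.sum_congr rfl fun m _ => ?_
        rw [congrFun (hgX k) m]
      rw [hsum0]
      exact key_ker (Λ k) (Λd k) (hMP2 k) (hMP4 k) _ _ ha
    rw [hzero] at hsum
    have h0 : ∑ m, (B : ℂ) * ⟪v m, X m⟫ = 0 := by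
      simpa using (hsum.unique hasSum_zero)
    have h1 : (B : ℂ) * ⟪v, X⟫ = 0 := by
      rw [PiLp.inner_apply, Finset.mul_sum]
      exact h0
    rcases mul_eq_zero.1 h1 with h | h
    · exact absurd h (by exact_mod_cast hB.ne')
    · exact h
  -- Pythagoras for the residual
  have pyth : ∀ z : PiLp 2 Xs, ‖A z - y‖ * ‖A z - y‖
      = ‖A (z - X)‖ * ‖A (z - X)‖ + ‖A X - y‖ * ‖A X - y‖ := by
    intro z
    have hdecomp : A z - y = A (z - X) + (A X - y) := by
      rw [map_sub]; abel
    rw [hdecomp]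
    exact norm_add_sq_eq_norm_sq_add_norm_sq_of_inner_eq_zero _ _ (horthY (z - X))
  have hls : ∀ z : PiLp 2 Xs, ‖A X - y‖ ≤ ‖A z - y‖ := by
    intro z
    nlinarith [pyth z, norm_nonneg (A (z - X)), norm_nonneg (A z - y),
      norm_nonneg (A X - y)]
  refine ⟨X, ?_, hls, ?_⟩
  · intro m
    have hrec := tight_reconstruct hB (htight_e m) (X m)
    have hfun : (fun k => ((Λd k).mulVec (fun n => ⟪f n k, y n⟫) m) •
          (((B⁻¹ : ℝ) : ℂ) • e m k))
        = fun k => ⟪e m k, X m⟫ • (((B⁻¹ : ℝ) : ℂ) • e m k) := by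
      funext k
      rw [hXm, hxv m k]
    rw [hfun]
    exact hrec
  · intro z hz
    have h1 : ‖A z - y‖ = ‖A X - y‖ := le_antisymm (hz X) (hls z)
    have h3 : ‖A (z - X)‖ * ‖A (z - X)‖ = 0 := by
      have := pyth z
      rw [h1] at this
      linarith
    have h4 : A (z - X) = 0 := by rwa [mul_self_eq_zero, norm_eq_zero] at h3
    have h5 : ⟪z - X, X⟫ = 0 := horthX (z - X) h4
    have h6 : ⟪X, z - X⟫ = (0 : ℂ) := inner_eq_zero_symm.1 h5
    have h7 : ‖z‖ * ‖z‖ = ‖X‖ * ‖X‖ + ‖z - X‖ * ‖z - X‖ := by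
      have hzd : z = X + (z - X) := by abel
      calc ‖z‖ * ‖z‖ = ‖X + (z - X)‖ * ‖X + (z - X)‖ := by rw [← hzd]
        _ = ‖X‖ * ‖X‖ + ‖z - X‖ * ‖z - X‖ :=
          norm_add_sq_eq_norm_sq_add_norm_sq_of_inner_eq_zero _ _ h6
    nlinarith [norm_nonneg z, norm_nonneg X, mul_self_nonneg ‖z - X‖]
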